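/- Fix a profile V over C, let w = R_2(V) be the 2-approval winner at V, and let i be a voter with w ∉ top_2(v_i). For every manipulative vote u of voter i at V with respect to 2-approval there exists a manipulative vote v' of voter i with |top_2(v_i)\top_2(v')| = 1 and R_2(V_{-i}, v') = R_2(V_{-i}, u). Consequently, every minimal manipulative vote v of such a voter i satisfies |top_2(v_i)\top_2(v)| = 1. -/

import Mathlib

open scoped Classical

namespace Paper

variable {C I : Type*}

/-- The set of the `k` highest-ranked candidates in the vote `v`. -/
noncomputable def topk [Fintype C] (k : ℕ) (v : LinearOrder C) : Finset C :=
  Finset.univ.filter fun c => (Finset.univ.filter fun d => v.lt c d).card < k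

/-- The highest-ranked candidate of the vote `v`. -/
noncomputable def top [Fintype C] [Nonempty C] (v : LinearOrder C) : C :=
  @Finset.max' C v Finset.univ Finset.univ_nonempty

/-- The `k`-approval score of candidate `c` in the profile `V`. -/
noncomputable def sck [Fintype C] [Fintype I] (k : ℕ) (V : I → LinearOrder C) (c : C) : ℕ :=
  (Finset.univ.filter fun i => c ∈ topk k (V i)).card

/-- The `k`-approval winner of the profile `V` with tie-breaking order `tb`:
the `tb`-greatest candidate among the candidates with maximal `k`-approval score;
equivalently, the unique candidate beating every other candidate. -/
noncomputable def winner [Fintype C] [Nonempty C] [Fintype I] (k : ℕ) (tb : LinearOrder C)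
    (V : I → LinearOrder C) : C :=
  @Finset.max' C tb (Finset.univ.filter fun x => ∀ y, sck k V y ≤ sck k V x)
    (by
      obtain ⟨b, -, hb⟩ := Finset.exists_max_image Finset.univ (sck k V)
        ⟨Classical.arbitrary C, Finset.mem_univ _⟩
      exact ⟨b, Finset.mem_filter.mpr ⟨Finset.mem_univ _, fun y => hb y (Finset.mem_univ y)⟩⟩)

/-- `v'` is a manipulative vote of voter `i` at the profile `V`. -/
def manip [Fintype C] [Nonempty C] [Fintype I] [DecidableEq I] (k : ℕ) (tb : LinearOrder C)
    (V : I → LinearOrder C) (i : I) (v' : LinearOrder C) : Prop :=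
  (V i).lt (winner k tb V) (winner k tb (Function.update V i v'))

/-- `v'` is a level-1 strategy of voter `i` at the profile `V`: the outcome it produces is
strictly preferred (w.r.t. `i`'s sincere vote) to every other feasible outcome. -/
def level1 [Fintype C] [Nonempty C] [Fintype I] [DecidableEq I] (k : ℕ) (tb : LinearOrder C)
    (V : I → LinearOrder C) (i : I) (v' : LinearOrder C) : Prop :=
  ∀ u : LinearOrder C,
    winner k tb (Function.update V i u) ≠ winner k tb (Function.update V i v') →
    (V i).lt (winner k tb (Function.update V i u)) (winner k tb (Function.update V i v'))

/-- `v` is a minimal manipulative vote of voter `i` at `V`. -/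
def minimalManip [Fintype C] [Nonempty C] [Fintype I] [DecidableEq I] (k : ℕ)
    (tb : LinearOrder C) (V : I → LinearOrder C) (i : I) (v : LinearOrder C) : Prop :=
  manip k tb V i v ∧ ∀ v', manip k tb V i v' →
    ((topk k (V i)) \ (topk k v)).card ≤ ((topk k (V i)) \ (topk k v')).card


section Aux
variable [Fintype C]

/-- rank of `c`: the number of candidates strictly above `c` in `v`. -/
noncomputable def rk (v : LinearOrder C) (c : C) : ℕ :=
  (Finset.univ.filter fun d => v.lt c d).card

lemma mem_topk (k : ℕ) (v : LinearOrder C) (c : C) : c ∈ topk k v ↔ rk v c < k := by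
  simp [topk, rk]

lemma rk_injective (v : LinearOrder C) : Function.Injective (rk v) := by
  letI := v
  have key : ∀ a b : C, a < b → rk v b < rk v a := by
    intro a b hab
    apply Finset.card_lt_card
    constructor
    · intro d hd
      simp only [Finset.mem_filter, Finset.mem_univ, true_and] at hd ⊢
      exact lt_trans hab hd
    · intro hsub
      have hb : b ∈ Finset.univ.filter fun d => v.lt a d := by
        simp only [Finset.mem_filter, Finset.mem_univ, true_and]; exact hab
      have := hsub hb
      simp only [Finset.mem_filter, Finset.mem_univ, true_and] at this
      exact lt_irrefl b this
  intro a b h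
  rcases lt_trichotomy a b with h1 | h1 | h1
  · exact absurd h (by have := key a b h1; omega)
  · exact h1
  · exact absurd h (by have := key b a h1; omega)

lemma rk_lt_card (v : LinearOrder C) (c : C) : rk v c < Fintype.card C := by
  letI := v
  have : (Finset.univ.filter fun d => v.lt c d) ⊆ Finset.univ.erase c := by
    intro d hd
    simp only [Finset.mem_filter, Finset.mem_univ, true_and] at hd
    exact Finset.mem_erase.2 ⟨(ne_of_gt hd), Finset.mem_univ d⟩
  have h1 := Finset.card_le_card this
  have h2 : (Finset.univ.erase c).card = Fintype.card C - 1 := by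
    rw [Finset.card_erase_of_mem (Finset.mem_univ c), Finset.card_univ]
  have h3 : 0 < Fintype.card C := Fintype.card_pos_iff.2 ⟨c⟩
  rw [rk]; omega

lemma card_topk (k : ℕ) (v : LinearOrder C) : (topk k v).card = min k (Fintype.card C) := by
  set n := Fintype.card C with hn
  have hf : ∀ c : C, rk v c < n := rk_lt_card v
  set f : C → Fin n := fun c => ⟨rk v c, hf c⟩ with hfdef
  have hinj : Function.Injective f := by
    intro a b h
    exact rk_injective v (congrArg Fin.val h)
  have htopk : topk k v = Finset.univ.filter fun c => ((f c : ℕ) < k) := by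
    ext c; simp [topk, rk, hfdef]
  have hsurj : Function.Surjective f :=
    ((Fintype.bijective_iff_injective_and_card f).2 ⟨hinj, by simp [hn]⟩).2
  rw [htopk]
  rw [← Finset.card_image_of_injective _ hinj]
  have himg : (Finset.univ.filter fun c => ((f c : ℕ) < k)).image f
      = Finset.univ.filter (fun m : Fin n => (m : ℕ) < k) := by
    ext m
    simp only [Finset.mem_image, Finset.mem_filter, Finset.mem_univ, true_and]
    constructor
    · rintro ⟨a, ha, rfl⟩; exact ha
    · intro hm
      obtain ⟨c, rfl⟩ := hsurj m
      exact ⟨c, hm, rfl⟩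
  rw [himg]
  rw [← Finset.card_image_of_injective _ (Fin.val_injective)]
  have : (Finset.univ.filter (fun m : Fin n => (m : ℕ) < k)).image Fin.val
      = Finset.range (min k n) := by
    ext m
    simp only [Finset.mem_image, Finset.mem_filter, Finset.mem_univ, true_and,
      Finset.mem_range, lt_min_iff]
    constructor
    · rintro ⟨a, ha, rfl⟩; exact ⟨ha, a.2⟩
    · rintro ⟨h1, h2⟩; exact ⟨⟨m, h2⟩, h1, rfl⟩
  rw [this, Finset.card_range]

/-- A vote placing the members of `A` on top. -/
noncomputable def mkVote (tb : LinearOrder C) (A : Finset C) : LinearOrder C :=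
  letI := tb
  LinearOrder.lift' (fun c => toLex ((if c ∈ A then 1 else 0 : ℕ), c))
    (fun a b h => congrArg (fun x => (ofLex x).2) h)

lemma mkVote_lt (tb : LinearOrder C) (A : Finset C) (c d : C) :
    (mkVote tb A).lt c d ↔
      ((if c ∈ A then 1 else 0 : ℕ) < (if d ∈ A then 1 else 0)) ∨
      ((if c ∈ A then 1 else 0 : ℕ) = (if d ∈ A then 1 else 0) ∧ tb.lt c d) := by
  letI := tb
  exact Prod.Lex.lt_iff

lemma topk_mkVote (tb : LinearOrder C) (A : Finset C) : topk A.card (mkVote tb A) = A := by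
  ext c
  rw [mem_topk]
  constructor
  · intro h
    by_contra hc
    have h2 : A.card ≤ rk (mkVote tb A) c := by
      rw [rk]
      apply Finset.card_le_card
      intro d hd
      simp only [Finset.mem_filter, Finset.mem_univ, true_and]
      rw [mkVote_lt]
      left
      simp [hc, hd]
    omega
  · intro hc
    have h1 : rk (mkVote tb A) c ≤ (A.erase c).card := by
      rw [rk]
      apply Finset.card_le_card
      intro d hd
      simp only [Finset.mem_filter, Finset.mem_univ, true_and] at hd
      rw [mkVote_lt] at hd
      simp only [hc, if_true] at hd
      rcases hd with hd | ⟨hd1, hd2⟩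
      · exact absurd hd (by split <;> omega)
      · have hdA : d ∈ A := by by_contra hh; simp [hh] at hd1
        refine Finset.mem_erase.2 ⟨?_, hdA⟩
        intro heq
        have hcc : tb.lt c c := heq ▸ hd2
        exact absurd hcc (@lt_irrefl C (tb.toPartialOrder.toPreorder) c)
    have h2 : (A.erase c).card = A.card - 1 := Finset.card_erase_of_mem hc
    have h3 : 0 < A.card := Finset.card_pos.2 ⟨c, hc⟩
    omega

end Aux

section Aux2
variable [Fintype C]

/-- `x` beats `y`: strictly higher score, or equal score and higher in the tie-break. -/
def bt (tb : LinearOrder C) (p q : ℕ) (x y : C) : Prop := q < p ∨ (q = p ∧ tb.lt y x)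

lemma bt_mono {tb : LinearOrder C} {p q p' q' : ℕ} {x y : C}
    (h : bt tb p q x y) (hp : p ≤ p') (hq : q' ≤ q) : bt tb p' q' x y := by
  rcases h with h | ⟨h1, h2⟩
  · left; omega
  · rcases Nat.lt_or_ge q' p' with h3 | h3
    · left; exact h3
    · right; exact ⟨by omega, h2⟩

lemma bt_trans {tb : LinearOrder C} {p q r : ℕ} {x y z : C}
    (h1 : bt tb p q x y) (h2 : bt tb q r y z) : bt tb p r x z := by
  letI := tb
  rcases h1 with h1 | ⟨h1a, h1b⟩ <;> rcases h2 with h2 | ⟨h2a, h2b⟩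
  · left; omega
  · left; omega
  · left; omega
  · right; exact ⟨by omega, lt_trans h2b h1b⟩

lemma winner_eq_iff [Nonempty C] [Fintype I] (k : ℕ) (tb : LinearOrder C)
    (P : I → LinearOrder C) (x : C) :
    winner k tb P = x ↔ ∀ y, y ≠ x → bt tb (sck k P x) (sck k P y) x y := by
  letI := tb
  set S := Finset.univ.filter fun z => ∀ y, sck k P y ≤ sck k P z with hS
  have hSmem : ∀ z, z ∈ S ↔ ∀ y, sck k P y ≤ sck k P z := by
    intro z; simp [hS]
  constructor
  · intro h y hy
    have hx : x ∈ S := h ▸ Finset.max'_mem S _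
    have hxmax := (hSmem x).1 hx
    rcases Nat.lt_or_ge (sck k P y) (sck k P x) with h1 | h1
    · exact Or.inl h1
    · have heq : sck k P y = sck k P x := le_antisymm (hxmax y) h1
      have hyS : y ∈ S := (hSmem y).2 (fun z => heq ▸ hxmax z)
      have hle : y ≤ x := h ▸ Finset.le_max' S y hyS
      exact Or.inr ⟨heq, lt_of_le_of_ne hle hy⟩
  · intro h
    have hx : x ∈ S := by
      rw [hSmem]
      intro y
      by_cases hy : y = x
      · subst hy; exact le_refl _
      · rcases h y hy with h1 | ⟨h1, -⟩
        · exact le_of_lt h1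
        · exact le_of_eq h1
    apply le_antisymm
    · apply Finset.max'_le
      intro y hyS
      by_cases hy : y = x
      · subst hy; exact le_refl _
      · rcases h y hy with h1 | ⟨-, h2⟩
        · exact absurd ((hSmem y).1 hyS x) (by omega)
        · exact le_of_lt h2
    · exact Finset.le_max' S x hx

/-- classical indicator -/
noncomputable def ind (P : Prop) : ℕ := if P then 1 else 0

lemma ind_of (P : Prop) (h : P) : ind P = 1 := by simp [ind, h]

lemma ind_of_not (P : Prop) (h : ¬ P) : ind P = 0 := by simp [ind, h]

lemma ind_le_one (P : Prop) : ind P ≤ 1 := by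
  by_cases h : P <;> simp [ind, h]

lemma ite_eq_ind (P : Prop) [Decidable P] : (if P then 1 else 0 : ℕ) = ind P := by
  by_cases h : P <;> simp [ind, h]

lemma sck_update [Fintype I] [DecidableEq I] (k : ℕ) (V : I → LinearOrder C) (i : I)
    (u : LinearOrder C) (c : C) :
    sck k (Function.update V i u) c =
      (∑ j ∈ Finset.univ.erase i, ind (c ∈ topk k (V j))) + ind (c ∈ topk k u) := by
  rw [sck, Finset.card_filter, ← Finset.sum_erase_add _ _ (Finset.mem_univ i),
    Function.update_self]
  congr 1
  · apply Finset.sum_congr rfl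
    intro j hj
    rw [Function.update_of_ne (Finset.mem_erase.1 hj).1, ite_eq_ind]
  · rw [ite_eq_ind]

lemma sck_base [Fintype I] [DecidableEq I] (k : ℕ) (V : I → LinearOrder C) (i : I) (c : C) :
    sck k V c =
      (∑ j ∈ Finset.univ.erase i, ind (c ∈ topk k (V j))) + ind (c ∈ topk k (V i)) := by
  conv_lhs => rw [← Function.update_eq_self i V]
  exact sck_update k V i (V i) c


lemma sdiff_card_eq {α : Type*} (d1 d2 : DecidableEq α) (s t : Finset α) :
    (@SDiff.sdiff (Finset α) (@Finset.instSDiff α d1) s t).card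
      = (@SDiff.sdiff (Finset α) (@Finset.instSDiff α d2) s t).card := by
  rw [Subsingleton.elim d1 d2]

end Aux2

/-- under 2-approval, a promoter can always achieve any manipulable outcome
by swapping a single candidate into his top two positions; hence his minimal manipulative
votes perform exactly one swap. -/
theorem statement_8 {C I : Type*} [Fintype C] [Nonempty C] [DecidableEq C]
    [Fintype I] [DecidableEq I]
    (tb : LinearOrder C) (V : I → LinearOrder C) (i : I)
    (hw : winner 2 tb V ∉ topk 2 (V i)) :
    (∀ u : LinearOrder C, manip 2 tb V i u →
      ∃ v' : LinearOrder C, manip 2 tb V i v' ∧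
        ((topk 2 (V i)) \ (topk 2 v')).card = 1 ∧
        winner 2 tb (Function.update V i v') = winner 2 tb (Function.update V i u)) ∧
    (∀ v : LinearOrder C, minimalManip 2 tb V i v →
      ((topk 2 (V i)) \ (topk 2 v)).card = 1) := by
  classical
  have hcard2 : 2 ≤ Fintype.card C := by
    by_contra h
    push_neg at h
    have h1 : (topk 2 (V i)).card = Fintype.card C := by
      rw [card_topk]; omega
    have h2 : topk 2 (V i) = Finset.univ :=
      Finset.eq_univ_of_card _ (by rw [h1])
    exact hw (h2 ▸ Finset.mem_univ _)
  set w := winner 2 tb V with hwV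
  set A0 := topk 2 (V i) with hA0
  have hA0card : A0.card = 2 := by rw [hA0, card_topk]; omega
  set s : C → ℕ := fun c => ∑ j ∈ Finset.univ.erase i, ind (c ∈ topk 2 (V j)) with hs
  have hscU : ∀ (u : LinearOrder C) (c : C),
      sck 2 (Function.update V i u) c = s c + ind (c ∈ topk 2 u) :=
    fun u c => sck_update 2 V i u c
  have hscV : ∀ c, sck 2 V c = s c + ind (c ∈ A0) := fun c => sck_base 2 V i c
  have F2 : ∀ y, y ≠ w → bt tb (sck 2 V w) (sck 2 V y) w y :=
    (winner_eq_iff 2 tb V w).mp hwV.symm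
  clear_value w A0 s
  have hirr : ∀ x : C, ¬ (V i).lt x x :=
    fun x => @lt_irrefl C ((V i).toPartialOrder.toPreorder) x
  -- any ballot whose top two coincide with the sincere top two elects w
  have same_winner : ∀ u' : LinearOrder C, topk 2 u' = A0 →
      winner 2 tb (Function.update V i u') = w := by
    intro u' h
    rw [winner_eq_iff]
    intro y hy
    have e : ∀ c, sck 2 (Function.update V i u') c = sck 2 V c := by
      intro c; rw [hscU, hscV, h]
    rw [e, e]
    exact F2 y hy
  have main : ∀ u : LinearOrder C, manip 2 tb V i u →
      ∃ v' : LinearOrder C, manip 2 tb V i v' ∧ (A0 \ topk 2 v').card = 1 ∧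
        winner 2 tb (Function.update V i v') = winner 2 tb (Function.update V i u) := by
    intro u hu
    set w' := winner 2 tb (Function.update V i u) with hw'
    have hlt : (V i).lt (winner 2 tb V) (winner 2 tb (Function.update V i u)) := hu
    rw [← hwV, ← hw'] at hlt
    have F1 : ∀ y, y ≠ w' →
        bt tb (sck 2 (Function.update V i u) w') (sck 2 (Function.update V i u) y) w' y :=
      (winner_eq_iff 2 tb _ w').mp hw'.symm
    clear_value w'
    have hww' : w ≠ w' := by
      intro h
      rw [← h] at hlt
      exact hirr w hlt
    set Au := topk 2 u with hAu
    have hAucard : Au.card = 2 := by rw [hAu, card_topk]; omega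
    have hF1' : ∀ y, y ≠ w' → bt tb (s w' + 1) (s y + ind (y ∈ Au)) w' y := by
      intro y hy
      have h1 := F1 y hy
      rw [hscU, hscU, ← hAu] at h1
      exact bt_mono h1 (by have := ind_le_one (w' ∈ Au); omega) (le_refl _)
    clear_value Au
    have hAu_nsub : ¬ Au ⊆ A0 := by
      intro hsub
      have heq : Au = A0 := Finset.eq_of_subset_of_card_le hsub (by omega)
      have h2 := same_winner u (hAu ▸ heq)
      rw [← hw'] at h2
      rw [h2] at hlt
      exact hirr w hlt
    -- the generic winner computation for a constructed ballot
    have key : ∀ A' : Finset C, A'.card = 2 → w' ∈ A' →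
        (∀ y, y ≠ w' → bt tb (s w' + 1) (s y + ind (y ∈ A')) w' y) →
        winner 2 tb (Function.update V i (mkVote tb A')) = w' := by
      intro A' hA'card hw'A' hbeats
      have htop : topk 2 (mkVote tb A') = A' := by
        have h := topk_mkVote tb A'
        rw [hA'card] at h
        exact h
      rw [winner_eq_iff]
      intro y hy
      rw [hscU, hscU, htop, ind_of _ hw'A']
      exact hbeats y hy
    by_cases hcase : w' ∈ A0
    · -- w' already among the sincere top two: swap in a fresh candidate from Au
      obtain ⟨c, hcAu, hcA0⟩ := Finset.not_subset.mp hAu_nsub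
      have hcw' : c ≠ w' := fun h => hcA0 (h ▸ hcase)
      have hA'card : ({w', c} : Finset C).card = 2 := by
        rw [Finset.card_insert_of_notMem (by simp [hcw'.symm]), Finset.card_singleton]
      have hbeats : ∀ y, y ≠ w' →
          bt tb (s w' + 1) (s y + ind (y ∈ ({w', c} : Finset C))) w' y := by
        intro y hy
        by_cases hyc : y = c
        · subst hyc
          have h1 := hF1' y hy
          rw [ind_of _ hcAu] at h1
          rw [ind_of _ (by simp : y ∈ ({w', y} : Finset C))]
          exact h1
        · have hynA : y ∉ ({w', c} : Finset C) := by simp [hy, hyc]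
          have h1 := hF1' y hy
          rw [ind_of_not _ hynA]
          exact bt_mono h1 (le_refl _) (by have := ind_le_one (y ∈ Au); omega)
      have hwin := key {w', c} hA'card (Finset.mem_insert_self _ _) hbeats
      refine ⟨mkVote tb {w', c}, ?_, ?_, ?_⟩
      · unfold manip
        rw [← hwV, hwin]
        exact hlt
      · have htop : topk 2 (mkVote tb {w', c}) = {w', c} := by
          have h := topk_mkVote tb ({w', c} : Finset C)
          rw [hA'card] at h
          exact h
        rw [htop]
        have hdiff : A0 \ {w', c} = A0.erase w' := by
          ext z
          simp only [Finset.mem_sdiff, Finset.mem_insert, Finset.mem_singleton,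
            Finset.mem_erase]
          constructor
          · rintro ⟨hz, hz2⟩; exact ⟨fun h => hz2 (Or.inl h), hz⟩
          · rintro ⟨hz1, hz2⟩
            refine ⟨hz2, ?_⟩
            rintro (h | h)
            · exact hz1 h
            · exact hcA0 (h ▸ hz2)
        rw [hdiff, Finset.card_erase_of_mem hcase, hA0card]
      · rw [hwin]
    · -- w' outside the sincere top two: swap it in for one of the two
      obtain ⟨a, ha⟩ := Finset.card_pos.mp (by omega : 0 < A0.card)
      have haw' : a ≠ w' := fun h => hcase (h ▸ ha)
      have haw : a ≠ w := fun h => hw (h ▸ ha)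
      have hA'card : ({w', a} : Finset C).card = 2 := by
        rw [Finset.card_insert_of_notMem (by simp [haw'.symm]), Finset.card_singleton]
      have hbeats : ∀ y, y ≠ w' →
          bt tb (s w' + 1) (s y + ind (y ∈ ({w', a} : Finset C))) w' y := by
        intro y hy
        by_cases hya : y = a
        · subst hya
          rw [ind_of _ (by simp : y ∈ ({w', y} : Finset C))]
          have h1 := hF1' w hww'
          have h2 : bt tb (s w' + 1) (s w) w' w :=
            bt_mono h1 (le_refl _) (by have := ind_le_one (w ∈ Au); omega)
          have h3 := F2 y haw
          rw [hscV, hscV, ind_of_not _ hw, ind_of _ ha] at h3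
          exact bt_trans h2 (bt_mono h3 (by omega) (le_refl _))
        · have hynA : y ∉ ({w', a} : Finset C) := by simp [hy, hya]
          have h1 := hF1' y hy
          rw [ind_of_not _ hynA]
          exact bt_mono h1 (le_refl _) (by have := ind_le_one (y ∈ Au); omega)
      have hwin := key {w', a} hA'card (Finset.mem_insert_self _ _) hbeats
      refine ⟨mkVote tb {w', a}, ?_, ?_, ?_⟩
      · unfold manip
        rw [← hwV, hwin]
        exact hlt
      · have htop : topk 2 (mkVote tb {w', a}) = {w', a} := by
          have h := topk_mkVote tb ({w', a} : Finset C)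
          rw [hA'card] at h
          exact h
        rw [htop]
        have hdiff : A0 \ {w', a} = A0.erase a := by
          ext z
          simp only [Finset.mem_sdiff, Finset.mem_insert, Finset.mem_singleton,
            Finset.mem_erase]
          constructor
          · rintro ⟨hz, hz2⟩; exact ⟨fun h => hz2 (Or.inr h), hz⟩
          · rintro ⟨hz1, hz2⟩
            refine ⟨hz2, ?_⟩
            rintro (h | h)
            · exact hcase (h ▸ hz2)
            · exact hz1 h
        rw [hdiff, Finset.card_erase_of_mem ha, hA0card]
      · rw [hwin]
  refine ⟨main, ?_⟩
  intro v hv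
  obtain ⟨v', hv'm, hv'card, -⟩ := main v hv.1
  have hle : (A0 \ topk 2 v).card ≤ 1 := by
    have h := hv.2 v' hv'm
    rw [← hA0] at h
    rw [← hv'card]
    exact le_trans (le_of_eq (sdiff_card_eq _ _ _ _))
      (le_trans h (le_of_eq (sdiff_card_eq _ _ _ _)))
  have hne0 : (A0 \ topk 2 v).card ≠ 0 := by
    intro h0
    have hsub : A0 ⊆ topk 2 v := by
      rw [← Finset.sdiff_eq_empty_iff_subset]
      exact Finset.card_eq_zero.mp h0
    have hvcard : (topk 2 v).card = 2 := by rw [card_topk]; omega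
    have heq : topk 2 v = A0 := (Finset.eq_of_subset_of_card_le hsub (by omega)).symm
    have h2 := same_winner v heq
    have h3 : (V i).lt (winner 2 tb V) (winner 2 tb (Function.update V i v)) := hv.1
    rw [← hwV, h2] at h3
    exact hirr w h3
  omega


end Paper
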